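/- The disjoint union G of n+1 copies of K_5 is minor minimal not n-apex: G is not n-apex, but for every edge e of G, both G − e and G/e are n-apex. -/

import Mathlib

open SimpleGraph

/-- `H` is a minor of `G`: branch-set definition. -/
def IsMinor {W V : Type*} (H : SimpleGraph W) (G : SimpleGraph V) : Prop :=
  ∃ f : W → Set V,
    (∀ w, (f w).Nonempty) ∧
    (∀ w, (G.induce (f w)).Connected) ∧
    (Pairwise fun w₁ w₂ => Disjoint (f w₁) (f w₂)) ∧
    ∀ ⦃w₁ w₂⦄, H.Adj w₁ w₂ → ∃ v₁ ∈ f w₁, ∃ v₂ ∈ f w₂, G.Adj v₁ v₂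

/-- The complete graph on 5 vertices. -/
def K5 : SimpleGraph (Fin 5) := ⊤

/-- The complete bipartite graph `K_{3,3}`. -/
def K33 : SimpleGraph (Fin 3 ⊕ Fin 3) := completeBipartiteGraph (Fin 3) (Fin 3)

/-- Planarity in Wagner's form: no `K₅` minor and no `K_{3,3}` minor. -/
def IsPlanar {V : Type*} (G : SimpleGraph V) : Prop :=
  ¬ IsMinor K5 G ∧ ¬ IsMinor K33 G

/-- `G` is `n`-apex: some set of at most `n` vertices can be deleted to leave a planar graph. -/
def IsNApex {V : Type*} (G : SimpleGraph V) (n : ℕ) : Prop :=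
  ∃ U : Finset V, U.card ≤ n ∧ IsPlanar (G.induce (↑U : Set V)ᶜ)

/-- Disjoint union of `n` copies of the complete graph on `m` vertices. -/
def copiesK (n m : ℕ) : SimpleGraph (Fin n × Fin m) :=
  SimpleGraph.fromRel (fun x y => x.1 = y.1)

/-- Contraction of the edge `uv` of `G`: identify `v` into `u`. -/
def contractEdge {V : Type*} (G : SimpleGraph V) (u v : V) :
    SimpleGraph {w : V // w ≠ v} :=
  SimpleGraph.fromRel (fun x y =>
    G.Adj x.1 y.1 ∨ (x.1 = u ∧ G.Adj v y.1) ∨ (y.1 = u ∧ G.Adj v x.1))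
open SimpleGraph

lemma color_const_walk {V α : Type*} {G : SimpleGraph V} {c : V → α}
    (h : ∀ ⦃x y⦄, G.Adj x y → c x = c y) {x y : V} (hr : G.Reachable x y) : c x = c y := by
  obtain ⟨p⟩ := hr
  induction p with
  | nil => rfl
  | cons h' _ ih => exact (h h').trans ih

lemma connected_of_subsingleton {V : Type*} [Nonempty V] [Subsingleton V]
    (G : SimpleGraph V) : G.Connected :=
  ⟨fun a b => by rw [Subsingleton.elim a b]⟩

lemma K33_connected : K33.Connected := by
  have : Nonempty (Fin 3 ⊕ Fin 3) := ⟨Sum.inl 0⟩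
  constructor
  intro a b
  have key : ∀ x : Fin 3 ⊕ Fin 3, K33.Reachable x (Sum.inl 0) := by
    intro x
    cases x with
    | inl i => exact (Adj.reachable (by simp [K33])).trans (Adj.reachable (by simp [K33]) : K33.Reachable (Sum.inr (0:Fin 3)) (Sum.inl 0))
    | inr j => exact Adj.reachable (by simp [K33])
  exact (key a).trans (key b).symm

lemma minor_color {W V α : Type*} {H : SimpleGraph W} {G : SimpleGraph V} (c : V → α)
    (hG : ∀ ⦃x y⦄, G.Adj x y → c x = c y) (hH : H.Connected) (hm : IsMinor H G) :
    ∃ (f : W → Set V) (a : α),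
      (∀ w, (f w).Nonempty) ∧
      (Pairwise fun w₁ w₂ => Disjoint (f w₁) (f w₂)) ∧
      (∀ w, ∀ z ∈ f w, c z = a) ∧
      ∀ ⦃w₁ w₂⦄, H.Adj w₁ w₂ → ∃ v₁ ∈ f w₁, ∃ v₂ ∈ f w₂, G.Adj v₁ v₂ := by
  obtain ⟨f, hne, hconn, hdisj, hadj⟩ := hm
  have const : ∀ w, ∀ z₁ ∈ f w, ∀ z₂ ∈ f w, c z₁ = c z₂ := by
    intro w z₁ h₁ z₂ h₂
    have hr := (hconn w).preconnected ⟨z₁, h₁⟩ ⟨z₂, h₂⟩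
    exact color_const_walk (G := G.induce (f w)) (c := fun x => c x.1)
      (fun x y hxy => hG hxy) hr
  have hWne : Nonempty W := hH.nonempty
  choose x hx using hne
  have hg : ∀ ⦃w₁ w₂⦄, H.Adj w₁ w₂ → c (x w₁) = c (x w₂) := by
    intro w₁ w₂ h
    obtain ⟨v₁, hv₁, v₂, hv₂, ha⟩ := hadj h
    exact (const _ _ (hx w₁) _ hv₁).trans ((hG ha).trans (const _ _ hv₂ _ (hx w₂)))
  set w₀ := Classical.arbitrary W
  refine ⟨f, c (x w₀), fun w => ⟨x w, hx w⟩, hdisj, ?_, hadj⟩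
  intro w z hz
  exact (const _ _ hz _ (hx w)).trans (color_const_walk hg (hH.preconnected w w₀))

lemma choice_inj {W V : Type*} {f : W → Set V}
    (hdisj : Pairwise fun w₁ w₂ => Disjoint (f w₁) (f w₂))
    {x : W → V} (hx : ∀ w, x w ∈ f w) : Function.Injective x := by
  intro w₁ w₂ h
  by_contra hne
  exact (Set.disjoint_left.mp (hdisj hne) (hx w₁)) (h ▸ hx w₂)

lemma isPlanar_master {V : Type*} {n : ℕ} (G : SimpleGraph V)
    (π : V → Fin (n + 1) × Fin 5) (hπ : Function.Injective π)
    (hadj : ∀ ⦃x y⦄, G.Adj x y → (π x).1 = (π y).1)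
    (hmiss : ∀ a : Fin (n + 1),
      (∃ k : Fin 5, ∀ x : V, (π x).1 = a → (π x).2 ≠ k) ∨
      (∃ p q : V, p ≠ q ∧ (π p).1 = a ∧ (π q).1 = a ∧ ¬ G.Adj p q)) :
    IsPlanar G := by
  constructor
  · -- no K5 minor
    rintro hm
    obtain ⟨f, a, hne, hdisj, hfib, hedge⟩ :=
      minor_color (fun v => (π v).1) hadj connected_top hm
    choose x hx using hne
    have hxinj : Function.Injective x := choice_inj hdisj hx
    have hfst : ∀ w, (π (x w)).1 = a := fun w => hfib w _ (hx w)
    have hyinj : Function.Injective (fun w => (π (x w)).2) := by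
      intro w₁ w₂ h
      apply hxinj; apply hπ
      exact Prod.ext ((hfst w₁).trans (hfst w₂).symm) h
    have hysurj : Function.Surjective (fun w => (π (x w)).2) :=
      (Finite.injective_iff_surjective.mp hyinj)
    -- every element of the fiber equals some x w
    have hcover : ∀ z : V, (π z).1 = a → ∃ w, x w = z := by
      intro z hz
      obtain ⟨w, hw⟩ := hysurj (π z).2
      exact ⟨w, hπ (Prod.ext ((hfst w).trans hz.symm) hw)⟩
    have hsing : ∀ w, f w = {x w} := by
      intro w
      apply Set.eq_singleton_iff_nonempty_unique_mem.mpr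
      refine ⟨⟨x w, hx w⟩, fun z hz => ?_⟩
      obtain ⟨w', hw'⟩ := hcover z (hfib w z hz)
      rcases eq_or_ne w' w with rfl | hne'
      · exact hw'.symm
      · exact absurd hz (Set.disjoint_left.mp (hdisj hne') (hw' ▸ hx w'))
    rcases hmiss a with ⟨k, hk⟩ | ⟨p, q, hpq, hp, hq, hnadj⟩
    · obtain ⟨w, hw⟩ := hysurj k
      exact hk (x w) (hfst w) hw
    · obtain ⟨wp, hwp⟩ := hcover p hp
      obtain ⟨wq, hwq⟩ := hcover q hq
      have hwne : wp ≠ wq := fun h => hpq (hwp ▸ hwq ▸ h ▸ rfl)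
      obtain ⟨v₁, hv₁, v₂, hv₂, hA⟩ := hedge (by simpa [K5] using hwne)
      rw [hsing wp, hwp] at hv₁
      rw [hsing wq, hwq] at hv₂
      rw [Set.mem_singleton_iff] at hv₁ hv₂
      exact hnadj (hv₁ ▸ hv₂ ▸ hA)
  · -- no K33 minor
    rintro hm
    obtain ⟨f, a, hne, hdisj, hfib, -⟩ :=
      minor_color (fun v => (π v).1) hadj K33_connected hm
    choose x hx using hne
    have hxinj : Function.Injective x := choice_inj hdisj hx
    have hfst : ∀ w, (π (x w)).1 = a := fun w => hfib w _ (hx w)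
    have hyinj : Function.Injective (fun w => (π (x w)).2) := by
      intro w₁ w₂ h
      apply hxinj; apply hπ
      exact Prod.ext ((hfst w₁).trans (hfst w₂).symm) h
    have := Fintype.card_le_of_injective _ hyinj
    simp [Fintype.card_sum] at this

lemma copiesK_fst {n m : ℕ} {x y : Fin n × Fin m} (h : (copiesK n m).Adj x y) :
    x.1 = y.1 := by
  rw [copiesK, SimpleGraph.fromRel_adj] at h
  rcases h.2 with h' | h'
  · exact h'
  · exact h'.symm

theorem stmt_11 (n : ℕ) :
    ¬ IsNApex (copiesK (n + 1) 5) n ∧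
    (∀ u v : Fin (n + 1) × Fin 5, (copiesK (n + 1) 5).Adj u v →
      IsNApex ((copiesK (n + 1) 5).deleteEdges {s(u, v)}) n ∧
      IsNApex (contractEdge (copiesK (n + 1) 5) u v) n) := by
  constructor
  · -- not n-apex
    rintro ⟨U, hcard, hpl⟩
    -- find an untouched copy
    have hex : ∃ i : Fin (n + 1), ∀ k : Fin 5, (i, k) ∉ U := by
      by_contra hc
      push_neg at hc
      choose k hk using hc
      have hinj : Function.Injective (fun i : Fin (n + 1) => (⟨(i, k i), hk i⟩ : ↥U)) := by
        intro i₁ i₂ h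
        simpa using congrArg (fun z : ↥U => (z : Fin (n+1) × Fin 5).1) h
      have := Fintype.card_le_of_injective _ hinj
      simp [Fintype.card_coe] at this
      omega
    obtain ⟨i, hi⟩ := hex
    apply hpl.1
    have hmem : ∀ k : Fin 5, ((i, k) : Fin (n+1) × Fin 5) ∈ ((↑U : Set (Fin (n+1) × Fin 5))ᶜ) :=
      fun k hk => hi k (Finset.mem_coe.mp hk)
    refine ⟨fun w => {⟨(i, w), hmem w⟩}, fun w => ⟨_, rfl⟩, ?_, ?_, ?_⟩
    · intro w
      exact connected_of_subsingleton _
    · intro w₁ w₂ hne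
      simp only [Set.disjoint_singleton]
      intro h
      exact hne (by simpa [Subtype.ext_iff, Prod.ext_iff] using h)
    · intro w₁ w₂ hadj
      have hne : w₁ ≠ w₂ := by simpa [K5] using hadj
      refine ⟨_, rfl, _, rfl, ?_⟩
      show (copiesK (n+1) 5).Adj (i, w₁) (i, w₂)
      rw [copiesK, SimpleGraph.fromRel_adj]
      exact ⟨by simp [Prod.ext_iff, hne], Or.inl rfl⟩
  · -- minimality
    intro u v hadj
    have huv : u ≠ v := hadj.ne
    have h1 : u.1 = v.1 := copiesK_fst hadj
    constructor
    · -- delete edge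
      refine ⟨(Finset.univ.erase u.1).image (fun j => (j, (0 : Fin 5))), ?_, ?_⟩
      · rw [Finset.card_image_of_injective _ (fun a b h => (Prod.mk.injEq .. ▸ h).1)]
        simp
      · set U := (Finset.univ.erase u.1).image (fun j => (j, (0 : Fin 5))) with hU
        have hUmem : ∀ z : Fin (n+1) × Fin 5, z ∈ U ↔ z.2 = 0 ∧ z.1 ≠ u.1 := by
          intro z
          constructor
          · intro hz
            rw [hU, Finset.mem_image] at hz
            obtain ⟨j, hj, hz⟩ := hz
            rw [Finset.mem_erase] at hj
            cases hz
            exact ⟨rfl, hj.1⟩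
          · rintro ⟨h2, h3⟩
            rw [hU, Finset.mem_image]
            exact ⟨z.1, Finset.mem_erase.mpr ⟨h3, Finset.mem_univ _⟩, Prod.ext rfl h2.symm⟩
        apply isPlanar_master _ Subtype.val Subtype.val_injective
        · intro x y h
          have h0 : ((copiesK (n+1) 5).deleteEdges {s(u, v)}).Adj x.1 y.1 := h
          exact copiesK_fst (SimpleGraph.deleteEdges_adj.mp h0).1
        · intro a
          by_cases ha : a = u.1
          · right
            have hu' : u ∈ (↑U : Set (Fin (n+1) × Fin 5))ᶜ := by
              intro h
              exact ((hUmem u).mp (Finset.mem_coe.mp h)).2 rfl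
            have hv' : v ∈ (↑U : Set (Fin (n+1) × Fin 5))ᶜ := by
              intro h
              exact ((hUmem v).mp (Finset.mem_coe.mp h)).2 h1.symm
            refine ⟨⟨u, hu'⟩, ⟨v, hv'⟩, by simpa [Subtype.ext_iff] using huv, ha ▸ rfl, ?_, ?_⟩
            · exact h1.symm.trans ha.symm
            · intro h
              have h0 : ((copiesK (n+1) 5).deleteEdges {s(u, v)}).Adj u v := h
              exact (SimpleGraph.deleteEdges_adj.mp h0).2 rfl
          · left
            refine ⟨0, fun x hx1 hx2 => ?_⟩
            exact x.2 (Finset.mem_coe.mpr ((hUmem x.1).mpr ⟨hx2, hx1 ▸ ha⟩))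
    · -- contract edge
      classical
      refine ⟨Finset.univ.filter (fun w : {w : Fin (n+1) × Fin 5 // w ≠ v} =>
        w.1.2 = 0 ∧ w.1.1 ≠ u.1), ?_, ?_⟩
      · refine le_trans (Finset.card_le_card_of_injOn (t := Finset.univ.erase u.1)
          (fun w => w.1.1) ?_ ?_) ?_
        · intro w hw
          simp only [Finset.coe_filter, Set.mem_setOf_eq] at hw
          exact Finset.mem_erase.mpr ⟨hw.2.2, Finset.mem_univ _⟩
        · intro w₁ hw₁ w₂ hw₂ h
          simp only [Finset.coe_filter, Set.mem_setOf_eq] at hw₁ hw₂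
          exact Subtype.ext (Prod.ext h (hw₁.2.1.trans hw₂.2.1.symm))
        · simp
      · set U := Finset.univ.filter (fun w : {w : Fin (n+1) × Fin 5 // w ≠ v} =>
          w.1.2 = 0 ∧ w.1.1 ≠ u.1) with hU
        apply isPlanar_master _ (fun x => x.1.1)
          (Subtype.val_injective.comp Subtype.val_injective)
        · intro x y h
          have h' : (contractEdge (copiesK (n+1) 5) u v).Adj x.1 y.1 := h
          rw [contractEdge, SimpleGraph.fromRel_adj] at h'
          rcases h'.2 with (h2 | ⟨h2, h3⟩ | ⟨h2, h3⟩) | (h2 | ⟨h2, h3⟩ | ⟨h2, h3⟩)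
          · exact copiesK_fst h2
          · exact (congrArg Prod.fst h2).trans (h1.trans (copiesK_fst h3))
          · exact ((congrArg Prod.fst h2).trans (h1.trans (copiesK_fst h3))).symm
          · exact (copiesK_fst h2).symm
          · exact ((congrArg Prod.fst h2).trans (h1.trans (copiesK_fst h3))).symm
          · exact (congrArg Prod.fst h2).trans (h1.trans (copiesK_fst h3))
        · intro a
          left
          by_cases ha : a = u.1
          · refine ⟨v.2, fun x hx1 hx2 => ?_⟩
            apply x.1.2
            exact Prod.ext (hx1.trans (ha.trans h1)) hx2
          · refine ⟨0, fun x hx1 hx2 => ?_⟩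
            apply x.2
            simp only [hU, Finset.coe_filter, Set.mem_setOf_eq]
            exact ⟨Finset.mem_univ _, hx2, hx1 ▸ ha⟩
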